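/- Fix q ∈ (0,1), real numbers 0 < a < h, and an angle φ ∈ (0, π/2). Then there exist constants c > 0 and c′ > 0 such that for every point w of the contour C_{a,φ} := {a + t·e^{iφ} : t ≥ 0} ∪ {a + t·e^{−iφ} : t ≥ 0} one has Re φ̂₀(w/h) ≤ c·log|w| + c′. -/

import Mathlib

/-- `φ̂₀(z) = Σ_{i≥0} qⁱz/(1−qⁱz)`, the analytic continuation of `φ₀`. -/
noncomputable def phiHat (q : ℝ) (z : ℂ) : ℂ :=
  ∑' i : ℕ, (q : ℂ) ^ i * z / (1 - (q : ℂ) ^ i * z)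

lemma max0_add_le (x y : ℝ) : max 0 (x + y) ≤ max 0 x + max 0 y :=
  max_le (by positivity) (add_le_add (le_max_right _ _) (le_max_right _ _))

lemma term_re_le (δ : ℝ) (hδ : 0 < δ) (u : ℂ) (hu : δ ≤ ‖(1 - u)‖) :
    (u / (1 - u)).re ≤ min (1/δ) (‖u‖ / δ) := by
  have h1 : (1 : ℂ) - u ≠ 0 := by
    intro hcontra
    rw [hcontra, norm_zero] at hu
    linarith
  refine le_min ?_ ?_
  · have heq : u / (1 - u) = 1 / (1 - u) - 1 := by field_simp; ring
    rw [heq]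
    have h2 : (1 / (1 - u)).re ≤ ‖(1 / (1 - u))‖ := Complex.re_le_norm _
    have h3 : ‖(1 / (1 - u))‖ = 1 / ‖(1 - u)‖ := by
      rw [norm_div]; simp
    have h4 : 1 / ‖(1 - u)‖ ≤ 1 / δ := by gcongr
    have h5 : ((1:ℂ) / (1 - u) - 1).re = (1 / (1 - u)).re - 1 := by simp
    rw [h5]
    linarith
  · have h2 : (u / (1 - u)).re ≤ ‖(u / (1 - u))‖ := Complex.re_le_norm _
    rw [norm_div] at h2
    have h4 : ‖u‖ / ‖(1 - u)‖ ≤ ‖u‖ / δ := by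
      gcongr
    linarith

set_option maxHeartbeats 2000000 in
lemma key_bound (q : ℝ) (hq0 : 0 < q) (hq1 : q < 1)
    (a h : ℝ) (ha : 0 < a) (hah : a < h)
    (φ : ℝ) (hsin : 0 < Real.sin φ) (hsin1 : Real.sin φ ≤ 1)
    (hcos0 : 0 ≤ Real.cos φ) (hcos1 : Real.cos φ ≤ 1)
    (t : ℝ) (ht : 0 ≤ t) (w : ℂ)
    (hre : w.re = a + t * Real.cos φ) (him : |w.im| = t * Real.sin φ) :
    (phiHat q (w / (h : ℂ))).re ≤
      (1 / ((1 - a/h) * Real.sin φ / 2 * (-Real.log q))) * Real.log (‖w‖)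
      + ((1 / ((1 - a/h) * Real.sin φ / 2 * (-Real.log q)))
          * (max 0 (-Real.log a) + max 0 (-Real.log h))
        + (1 / ((1 - a/h) * Real.sin φ / 2)
          + 1 / ((1 - a/h) * Real.sin φ / 2) * (1 - q)⁻¹)) := by
  have h0 : 0 < h := ha.trans hah
  have hεpos' : 0 < 1 - a / h := by
    have : a / h < 1 := (div_lt_one h0).2 hah
    linarith
  obtain ⟨ε, hεdef⟩ : ∃ ε : ℝ, ε = 1 - a / h := ⟨_, rfl⟩
  obtain ⟨δ, hδdef⟩ : ∃ δ : ℝ, δ = ε * Real.sin φ / 2 := ⟨_, rfl⟩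
  obtain ⟨L, hLdef⟩ : ∃ L : ℝ, L = -Real.log q := ⟨_, rfl⟩
  obtain ⟨c, hcdef⟩ : ∃ c : ℝ, c = 1 / (δ * L) := ⟨_, rfl⟩
  rw [← hεdef, ← hδdef, ← hLdef, ← hcdef]
  have hεpos : 0 < ε := hεdef ▸ hεpos'
  have hδ : 0 < δ := by rw [hδdef]; positivity
  have hδε : δ ≤ ε / 2 := by rw [hδdef]; nlinarith
  have hL : 0 < L := by
    have := Real.log_neg hq0 hq1
    rw [hLdef]; linarith
  have hc : 0 < c := by rw [hcdef]; exact one_div_pos.2 (mul_pos hδ hL)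
  -- basic facts about w
  have hwre : a ≤ w.re := by
    rw [hre]; nlinarith [mul_nonneg ht hcos0]
  have habs : a ≤ ‖w‖ := le_trans hwre (Complex.re_le_norm w)
  have hw0 : 0 < ‖w‖ := lt_of_lt_of_le ha habs
  obtain ⟨M, hMdef⟩ : ∃ M : ℝ, M = ‖w‖ / h := ⟨_, rfl⟩
  have hM0 : 0 < M := by rw [hMdef]; positivity
  have habsz : ‖(w / (h:ℂ))‖ = M := by
    rw [hMdef, norm_div, Complex.norm_real, Real.norm_eq_abs, abs_of_pos h0]
  -- the contour stays away from 1 under scaling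
  have hcontour : ∀ i : ℕ, δ ≤ ‖(1 - (q:ℂ)^i * (w / (h:ℂ)))‖ := by
    intro i
    have hqi0 : 0 < q ^ i := pow_pos hq0 i
    have hqi1 : q ^ i ≤ 1 := pow_le_one₀ hq0.le hq1.le
    have hu : (q:ℂ)^i * (w / (h:ℂ)) = ((q^i / h : ℝ) : ℂ) * w := by
      push_cast
      field_simp
    obtain ⟨r, hrdef⟩ : ∃ r : ℝ, r = q ^ i / h * t := ⟨_, rfl⟩
    have hr0 : 0 ≤ r := by rw [hrdef]; positivity
    have hure : ((q:ℂ)^i * (w / (h:ℂ))).re = q ^ i / h * w.re := by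
      rw [hu, Complex.re_ofReal_mul]
    have huim : ((q:ℂ)^i * (w / (h:ℂ))).im = q ^ i / h * w.im := by
      rw [hu, Complex.im_ofReal_mul]
    rcases le_or_gt r (ε / 2) with hcase | hcase
    · -- real part bound
      have e2 : q ^ i * a / h ≤ a / h := by
        gcongr
        nlinarith
      have h1 : ((q:ℂ)^i * (w / (h:ℂ))).re ≤ a / h + r := by
        rw [hure, hre]
        have e1 : q ^ i / h * (a + t * Real.cos φ) = q ^ i * a / h + r * Real.cos φ := by
          rw [hrdef]; ring
        rw [e1]
        nlinarith
      have h2 : δ ≤ (1 - (q:ℂ)^i * (w / (h:ℂ))).re := by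
        simp only [Complex.sub_re, Complex.one_re]
        have : a / h + r ≤ 1 - ε / 2 := by
          rw [hεdef] at hcase ⊢; linarith
        linarith
      calc δ ≤ (1 - (q:ℂ)^i * (w / (h:ℂ))).re := h2
        _ ≤ ‖_‖ := Complex.re_le_norm _
    · -- imaginary part bound
      have h1 : |((q:ℂ)^i * (w / (h:ℂ))).im| = r * Real.sin φ := by
        rw [huim, abs_mul, abs_of_pos (by positivity : (0:ℝ) < q ^ i / h), him, hrdef]
        ring
      have h2 : δ ≤ |((q:ℂ)^i * (w / (h:ℂ))).im| := by
        rw [h1, hδdef]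
        nlinarith
      calc δ ≤ |((q:ℂ)^i * (w / (h:ℂ))).im| := h2
        _ = |(1 - (q:ℂ)^i * (w / (h:ℂ))).im| := by
            rw [Complex.sub_im, Complex.one_im, zero_sub, abs_neg]
        _ ≤ ‖_‖ := Complex.abs_im_le_norm _
  -- the series
  obtain ⟨f, hfdef⟩ : ∃ f : ℕ → ℂ,
      f = fun i => (q:ℂ)^i * (w / (h:ℂ)) / (1 - (q:ℂ)^i * (w / (h:ℂ))) := ⟨_, rfl⟩
  have hnum : ∀ i : ℕ, ‖((q:ℂ)^i * (w / (h:ℂ)))‖ = q ^ i * M := by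
    intro i
    rw [norm_mul, habsz, norm_pow, Complex.norm_real, Real.norm_eq_abs, abs_of_pos hq0]
  have hfabs : ∀ i : ℕ, ‖f i‖ =
      ‖((q:ℂ)^i * (w / (h:ℂ)))‖ / ‖(1 - (q:ℂ)^i * (w / (h:ℂ)))‖ := by
    intro i
    simp only [hfdef, norm_div]
  have hsumf : Summable f := by
    apply Summable.of_norm_bounded (g := fun i => M / δ * q ^ i)
      ((summable_geometric_of_lt_one hq0.le hq1).mul_left _)
    intro i
    rw [hfabs i, hnum i]
    have h1 : q ^ i * M / ‖(1 - (q:ℂ)^i * (w / (h:ℂ)))‖ ≤ q ^ i * M / δ := by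
      gcongr
      exact hcontour i
    calc q ^ i * M / ‖(1 - (q:ℂ)^i * (w / (h:ℂ)))‖ ≤ q ^ i * M / δ := h1
      _ = M / δ * q ^ i := by ring
  have hsumre : Summable (fun i => (f i).re) := by
    apply Summable.of_norm_bounded hsumf.norm
    intro i
    simpa using Complex.abs_re_le_norm (f i)
  obtain ⟨g, hgdef⟩ : ∃ g : ℕ → ℝ,
      g = fun i => min (1/δ) (q ^ i * M / δ) := ⟨_, rfl⟩
  have hgeq : ∀ i, g i = min (1/δ) (q ^ i * M / δ) := by
    intro i; rw [hgdef]
  have hgle : ∀ i, g i ≤ M / δ * q ^ i := by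
    intro i
    rw [hgeq i]
    calc min (1/δ) (q ^ i * M / δ) ≤ q ^ i * M / δ := min_le_right _ _
      _ = M / δ * q ^ i := by ring
  have hg0 : ∀ i, 0 ≤ g i := by
    intro i
    rw [hgeq i]
    have h1 : (0:ℝ) ≤ 1/δ := by positivity
    have h2 : (0:ℝ) ≤ q ^ i * M / δ := by positivity
    exact le_min h1 h2
  have hsumg : Summable g :=
    Summable.of_nonneg_of_le hg0 hgle ((summable_geometric_of_lt_one hq0.le hq1).mul_left _)
  have hterm : ∀ i, (f i).re ≤ g i := by
    intro i
    have h1 := term_re_le δ hδ ((q:ℂ)^i * (w / (h:ℂ))) (hcontour i)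
    rw [hnum i] at h1
    rw [hgeq i, hfdef]
    exact h1
  -- split the sum at N
  obtain ⟨N, hNdef⟩ : ∃ N : ℕ, N = ⌈Real.log M / L⌉₊ := ⟨_, rfl⟩
  have hqNM : q ^ N * M ≤ 1 := by
    rcases le_or_gt M 1 with hM | hM
    · nlinarith [pow_le_one₀ hq0.le hq1.le (n := N), pow_pos hq0 N]
    · have hlogM : 0 < Real.log M := Real.log_pos hM
      have hN : Real.log M / L ≤ (N : ℝ) := by rw [hNdef]; exact Nat.le_ceil _
      have h1 : Real.log M ≤ (N : ℝ) * L := by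
        rw [div_le_iff₀ hL] at hN; linarith
      have h2 : (N : ℝ) * Real.log q ≤ -Real.log M := by
        rw [hLdef] at h1; nlinarith
      have h3 : q ^ N = Real.exp ((N : ℝ) * Real.log q) := by
        rw [← Real.exp_log hq0, ← Real.exp_nat_mul, Real.exp_log hq0]
      have h4 : q ^ N ≤ M⁻¹ := by
        rw [h3, ← Real.exp_log (by positivity : (0:ℝ) < M⁻¹), Real.log_inv]
        exact Real.exp_le_exp.2 h2
      calc q ^ N * M ≤ M⁻¹ * M := by nlinarith
        _ = 1 := inv_mul_cancel₀ hM0.ne'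
  have hNle : (N : ℝ) ≤ max 0 (Real.log M) / L + 1 := by
    rcases le_or_gt (Real.log M) 0 with hM | hM
    · have hN0 : N = 0 := by
        rw [hNdef]
        exact Nat.ceil_eq_zero.2 (div_nonpos_of_nonpos_of_nonneg hM hL.le)
      rw [hN0]
      have h1 : (0:ℝ) ≤ max 0 (Real.log M) := le_max_left _ _
      have h2 : 0 ≤ max 0 (Real.log M) / L := div_nonneg h1 hL.le
      push_cast; linarith
    · have h1 : (N : ℝ) < Real.log M / L + 1 := by
        rw [hNdef]
        exact Nat.ceil_lt_add_one (div_nonneg hM.le hL.le)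
      have h2 : max 0 (Real.log M) = Real.log M := max_eq_right hM.le
      rw [h2]; linarith
  -- bound the head and tail
  have hhead : ∑ i ∈ Finset.range N, g i ≤ (N : ℝ) * (1 / δ) := by
    calc ∑ i ∈ Finset.range N, g i ≤ Finset.card (Finset.range N) • (1/δ) :=
          Finset.sum_le_card_nsmul _ _ _ (fun i _ => by rw [hgeq i]; exact min_le_left _ _)
      _ = (N : ℝ) * (1 / δ) := by
          rw [Finset.card_range, nsmul_eq_mul]
  have htail : ∑' i, g (i + N) ≤ 1 / δ * (1 - q)⁻¹ := by
    have hs1 : Summable (fun i => g (i + N)) := (summable_nat_add_iff N).2 hsumg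
    have hs2 : Summable (fun i : ℕ => 1 / δ * q ^ i) :=
      (summable_geometric_of_lt_one hq0.le hq1).mul_left _
    have hle : ∀ i, g (i + N) ≤ 1 / δ * q ^ i := by
      intro i
      rw [hgeq (i + N)]
      calc min (1/δ) (q ^ (i + N) * M / δ) ≤ q ^ (i + N) * M / δ := min_le_right _ _
        _ = q ^ i * (q ^ N * M) / δ := by rw [pow_add]; ring
        _ ≤ q ^ i * 1 / δ := by
            gcongr
        _ = 1 / δ * q ^ i := by ring
    calc ∑' i, g (i + N) ≤ ∑' i : ℕ, 1 / δ * q ^ i := Summable.tsum_le_tsum hle hs1 hs2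
      _ = 1 / δ * (1 - q)⁻¹ := by
          rw [tsum_mul_left, tsum_geometric_of_lt_one hq0.le hq1]
  -- assemble
  have hsum : (phiHat q (w / (h:ℂ))).re ≤ (N : ℝ) * (1 / δ) + 1 / δ * (1 - q)⁻¹ := by
    have e0 : phiHat q (w / (h:ℂ)) = ∑' i, f i := by rw [hfdef]; rfl
    have e1 : (phiHat q (w / (h:ℂ))).re = ∑' i, (f i).re := by
      rw [e0, Complex.re_tsum hsumf]
    rw [e1]
    have e2 : ∑' i, (f i).re ≤ ∑' i, g i := Summable.tsum_le_tsum hterm hsumre hsumg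
    have e3 : ∑' i, g i = (∑ i ∈ Finset.range N, g i) + ∑' i, g (i + N) :=
      (Summable.sum_add_tsum_nat_add N hsumg).symm
    rw [e3] at e2
    linarith
  have hmain : (phiHat q (w / (h:ℂ))).re ≤ c * max 0 (Real.log M)
      + (1/δ + 1/δ * (1-q)⁻¹) := by
    have h1 : (N : ℝ) * (1 / δ) ≤ (max 0 (Real.log M) / L + 1) * (1 / δ) := by
      gcongr
    have h2 : (max 0 (Real.log M) / L + 1) * (1 / δ) = c * max 0 (Real.log M) + 1/δ := by
      rw [hcdef]
      field_simp
    linarith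
  -- convert log M to log |w|
  have hlogM : Real.log M = Real.log (‖w‖) - Real.log h := by
    rw [hMdef, Real.log_div hw0.ne' h0.ne']
  have hmax1 : max 0 (Real.log M) ≤ max 0 (Real.log (‖w‖)) + max 0 (-Real.log h) := by
    rw [hlogM, sub_eq_add_neg]
    exact max0_add_le _ _
  have hmax2 : max 0 (Real.log (‖w‖)) ≤
      Real.log (‖w‖) + max 0 (-Real.log a) := by
    have hla : Real.log a ≤ Real.log (‖w‖) := Real.log_le_log ha habs
    apply max_le
    · have := le_max_right (0:ℝ) (-Real.log a)
      linarith
    · exact le_add_of_nonneg_right (le_max_left _ _)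
  have hfin : c * max 0 (Real.log M) ≤
      c * Real.log (‖w‖) + c * (max 0 (-Real.log a) + max 0 (-Real.log h)) := by
    have h1 : max 0 (Real.log M) ≤
        Real.log (‖w‖) + (max 0 (-Real.log a) + max 0 (-Real.log h)) := by
      linarith
    nlinarith
  linarith

theorem stmt_16 (q : ℝ) (hq : q ∈ Set.Ioo (0:ℝ) 1)
    (a h : ℝ) (ha : 0 < a) (hah : a < h)
    (φ : ℝ) (hφ : φ ∈ Set.Ioo 0 (Real.pi / 2)) :
    ∃ c > (0:ℝ), ∃ c' > (0:ℝ), ∀ w : ℂ,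
      (∃ t : ℝ, 0 ≤ t ∧
        (w = (a : ℂ) + (t : ℂ) * Complex.exp (Complex.I * (φ : ℂ)) ∨
         w = (a : ℂ) + (t : ℂ) * Complex.exp (-(Complex.I * (φ : ℂ))))) →
      (phiHat q (w / (h : ℂ))).re ≤ c * Real.log (‖w‖) + c' := by
  obtain ⟨hq0, hq1⟩ := hq
  obtain ⟨hφ0, hφ2⟩ := hφ
  have hpi : 0 < Real.pi := Real.pi_pos
  have hsin : 0 < Real.sin φ := Real.sin_pos_of_pos_of_lt_pi hφ0 (by linarith)
  have hsin1 : Real.sin φ ≤ 1 := Real.sin_le_one φ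
  have hcos0 : 0 ≤ Real.cos φ := Real.cos_nonneg_of_mem_Icc ⟨by linarith, hφ2.le⟩
  have hcos1 : Real.cos φ ≤ 1 := Real.cos_le_one φ
  have h0 : 0 < h := ha.trans hah
  have hεpos : 0 < 1 - a / h := by
    have : a / h < 1 := (div_lt_one h0).2 hah
    linarith
  have hL : 0 < -Real.log q := by
    have := Real.log_neg hq0 hq1
    linarith
  have hδ : 0 < (1 - a/h) * Real.sin φ / 2 := by positivity
  refine ⟨1 / ((1 - a/h) * Real.sin φ / 2 * (-Real.log q)), one_div_pos.2 (mul_pos hδ hL),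
    (1 / ((1 - a/h) * Real.sin φ / 2 * (-Real.log q)))
        * (max 0 (-Real.log a) + max 0 (-Real.log h))
      + (1/((1 - a/h) * Real.sin φ / 2)
        + 1/((1 - a/h) * Real.sin φ / 2) * (1-q)⁻¹), ?_, ?_⟩
  · have h1 : 0 < 1/((1 - a/h) * Real.sin φ / 2) := by positivity
    have h2 : 0 < 1/((1 - a/h) * Real.sin φ / 2) * (1-q)⁻¹ := by
      have : 0 < 1 - q := by linarith
      positivity
    have h3 : 0 ≤ (1 / ((1 - a/h) * Real.sin φ / 2 * (-Real.log q)))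
        * (max 0 (-Real.log a) + max 0 (-Real.log h)) := by
      have ha1 : (0:ℝ) ≤ max 0 (-Real.log a) := le_max_left _ _
      have ha2 : (0:ℝ) ≤ max 0 (-Real.log h) := le_max_left _ _
      have ha3 : (0:ℝ) ≤ 1 / ((1 - a/h) * Real.sin φ / 2 * (-Real.log q)) :=
        le_of_lt (one_div_pos.2 (mul_pos hδ hL))
      nlinarith
    linarith
  · rintro w ⟨t, ht, hw | hw⟩
    · have hexp : Complex.exp (Complex.I * (φ:ℂ)) =
          Complex.cos φ + Complex.sin φ * Complex.I := by
        rw [mul_comm, Complex.exp_mul_I]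
      have hre : w.re = a + t * Real.cos φ := by
        rw [hw, hexp]
        simp [Complex.add_re, Complex.mul_re, Complex.mul_im, Complex.cos_ofReal_re,
          Complex.sin_ofReal_re, Complex.cos_ofReal_im, Complex.sin_ofReal_im]
      have him : |w.im| = t * Real.sin φ := by
        have hwim : w.im = t * Real.sin φ := by
          rw [hw, hexp]
          simp [Complex.add_im, Complex.mul_re, Complex.mul_im, Complex.cos_ofReal_re,
            Complex.sin_ofReal_re, Complex.cos_ofReal_im, Complex.sin_ofReal_im]
        rw [hwim, abs_of_nonneg (mul_nonneg ht hsin.le)]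
      exact key_bound q hq0 hq1 a h ha hah φ hsin hsin1 hcos0 hcos1 t ht w hre him
    · have hexp : Complex.exp (-(Complex.I * (φ:ℂ))) =
          Complex.cos φ - Complex.sin φ * Complex.I := by
        rw [show -(Complex.I * (φ:ℂ)) = ((-φ:ℝ):ℂ) * Complex.I by push_cast; ring,
          Complex.exp_mul_I]
        push_cast
        rw [Complex.cos_neg, Complex.sin_neg]
        ring
      have hre : w.re = a + t * Real.cos φ := by
        rw [hw, hexp]
        simp [Complex.sub_re, Complex.add_re, Complex.mul_re, Complex.mul_im,
          Complex.cos_ofReal_re, Complex.sin_ofReal_re, Complex.cos_ofReal_im,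
          Complex.sin_ofReal_im]
      have him : |w.im| = t * Real.sin φ := by
        have hwim : w.im = -(t * Real.sin φ) := by
          rw [hw, hexp]
          simp [Complex.sub_im, Complex.add_im, Complex.mul_re, Complex.mul_im,
            Complex.cos_ofReal_re, Complex.sin_ofReal_re, Complex.cos_ofReal_im,
            Complex.sin_ofReal_im]
        rw [hwim, abs_neg, abs_of_nonneg (mul_nonneg ht hsin.le)]
      exact key_bound q hq0 hq1 a h ha hah φ hsin hsin1 hcos0 hcos1 t ht w hre him
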